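/- arXiv:2510.12804 — 2 statements merged into one kernel-verified Lean document; each statement's English description precedes it below -/
import Mathlib

section
/- Let θ ∈ (0, π). If h is a positive convex solution (∇²h + hσ > 0 on C_θ) of any equation with the Robin boundary condition ∇_μ h = cot θ · h on ∂C_θ, then the gradient bound max_{C_θ} |∇h| ≤ (1 + cot²θ)^{1/2} · max_{C_θ} h holds. -/
/- Formalization of statements from "The L_p dual Minkowski problem for capillary
hypersurfaces".

We work in the ambient space `ℝ^{n+1}`.  The spherical cap `C_θ` is the part of the unit
sphere centred at `cos θ • e` (where `e = -E_{n+1}`) lying in the closed upper half-space.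
Functions on `C_θ` are represented by ambient functions `h : Euc n → ℝ`; the intrinsic
(round-metric) gradient `∇h` and Hessian `∇²h` of the restriction of `h` to `C_θ` are
expressed through ambient derivatives (for tangential arguments these expressions depend
only on the restriction of `h` to the cap).  The quantity `det(∇²h + hσ)` is encoded as the
determinant of the endomorphism of `ℝ^{n+1}` acting as `∇²h + hσ` on the tangent space of
the cap and as the identity on the normal line. -/

open Real Set
open scoped RealInnerProductSpace

noncomputable section

/-- Ambient Euclidean space `ℝ^{n+1}`. -/
abbrev Euc (n : ℕ) : Type := EuclideanSpace ℝ (Fin (n + 1))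

/-- The unit vector `e = -E_{n+1}`. -/
def eVec (n : ℕ) : Euc n := -(EuclideanSpace.single (Fin.last n) (1 : ℝ))

/-- `ν(ξ) = ξ - cos θ • e`, the unit normal (at `ξ`) of the sphere containing the cap `C_θ`. -/
def sphNormal (n : ℕ) (θ : ℝ) (ξ : Euc n) : Euc n := ξ - Real.cos θ • eVec n

/-- The spherical cap `C_θ = {ξ ∈ closure ℝ^{n+1}_+ : |ξ - cos θ • e| = 1}`. -/
def cap (n : ℕ) (θ : ℝ) : Set (Euc n) :=
  {ξ | 0 ≤ ξ (Fin.last n) ∧ ‖sphNormal n θ ξ‖ = 1}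

/-- The boundary `∂C_θ`. -/
def capBdry (n : ℕ) (θ : ℝ) : Set (Euc n) :=
  {ξ | ξ (Fin.last n) = 0 ∧ ‖sphNormal n θ ξ‖ = 1}

/-- The outward unit conormal `μ` of `∂C_θ` in `C_θ` (at boundary points). -/
def conormal (n : ℕ) (θ : ℝ) (ξ : Euc n) : Euc n :=
  Real.cot θ • ξ + Real.sin θ • eVec n

/-- Orthogonal projection of `ℝ^{n+1}` onto the tangent space of the cap at `ξ`. -/
def tproj (n : ℕ) (θ : ℝ) (ξ : Euc n) : Euc n →L[ℝ] Euc n :=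
  ContinuousLinearMap.id ℝ (Euc n) - (innerSL ℝ (sphNormal n θ ξ)).smulRight (sphNormal n θ ξ)

/-- `X` is tangent to the cap at `ξ`. -/
def IsTangent (n : ℕ) (θ : ℝ) (ξ X : Euc n) : Prop :=
  ⟪X, sphNormal n θ ξ⟫ = 0

/-- Intrinsic (round-metric) gradient `∇h` of `h` on the cap. -/
def sgrad (n : ℕ) (θ : ℝ) (h : Euc n → ℝ) (ξ : Euc n) : Euc n :=
  tproj n θ ξ (gradient h ξ)

/-- Intrinsic (round-metric) Hessian `∇²h(X,Y)` of `h` on the cap (tangential arguments). -/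
def shess (n : ℕ) (θ : ℝ) (h : Euc n → ℝ) (ξ X Y : Euc n) : ℝ :=
  ⟪(fderiv ℝ (gradient h) ξ) X, Y⟫ - ⟪gradient h ξ, sphNormal n θ ξ⟫ * ⟪X, Y⟫

/-- Endomorphism representing the intrinsic Hessian `∇²h` on tangent vectors
(and vanishing on the normal line). -/
def thessOp (n : ℕ) (θ : ℝ) (h : Euc n → ℝ) (ξ : Euc n) : Euc n →L[ℝ] Euc n :=
  ((tproj n θ ξ).comp ((fderiv ℝ (gradient h) ξ).comp (tproj n θ ξ)))
    - ⟪gradient h ξ, sphNormal n θ ξ⟫ • tproj n θ ξ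

/-- Rank-one projection onto the normal direction at `ξ`. -/
def normalPart (n : ℕ) (θ : ℝ) (ξ : Euc n) : Euc n →L[ℝ] Euc n :=
  (innerSL ℝ (sphNormal n θ ξ)).smulRight (sphNormal n θ ξ)

/-- Endomorphism acting as `∇²h + hσ` on the tangent space and as the identity on the
normal line. -/
def hessOp (n : ℕ) (θ : ℝ) (h : Euc n → ℝ) (ξ : Euc n) : Euc n →L[ℝ] Euc n :=
  thessOp n θ h ξ + h ξ • tproj n θ ξ + normalPart n θ ξ

/-- `det(∇²h + hσ)` at `ξ`. -/
def sdet (n : ℕ) (θ : ℝ) (h : Euc n → ℝ) (ξ : Euc n) : ℝ :=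
  LinearMap.det (hessOp n θ h ξ).toLinearMap

/-- `h > 0` on the cap. -/
def PosOnCap (n : ℕ) (θ : ℝ) (h : Euc n → ℝ) : Prop := ∀ ξ ∈ cap n θ, 0 < h ξ

/-- Convexity of a solution: `∇²h + hσ > 0` on the cap. -/
def IsConvexSol (n : ℕ) (θ : ℝ) (h : Euc n → ℝ) : Prop :=
  ∀ ξ ∈ cap n θ, ∀ X : Euc n, IsTangent n θ ξ X → X ≠ 0 →
    0 < shess n θ h ξ X X + h ξ * ⟪X, X⟫

/-- The right-hand side `f·h^{p-1}·(h² + |∇h|²)^{(n+1-q)/2}`. -/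
def eqRHS (n : ℕ) (θ p q : ℝ) (f h : Euc n → ℝ) (ξ : Euc n) : ℝ :=
  f ξ * h ξ ^ (p - 1) * (h ξ ^ 2 + ‖sgrad n θ h ξ‖ ^ 2) ^ (((n : ℝ) + 1 - q) / 2)

/-- `h` solves `det(∇²h + hσ) = f·h^{p-1}(h² + |∇h|²)^{(n+1-q)/2}` in `C_θ`. -/
def SolvesEq (n : ℕ) (θ p q : ℝ) (f h : Euc n → ℝ) : Prop :=
  ∀ ξ ∈ cap n θ, sdet n θ h ξ = eqRHS n θ p q f h ξ

/-- Robin boundary condition `∇_μ h = cot θ · h` on `∂C_θ`. -/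
def RobinBC (n : ℕ) (θ : ℝ) (h : Euc n → ℝ) : Prop :=
  ∀ ξ ∈ capBdry n θ, ⟪sgrad n θ h ξ, conormal n θ ξ⟫ = Real.cot θ * h ξ

/-- `l(ξ) = sin²θ + cos θ·⟨ξ, e⟩`. -/
def lFun (n : ℕ) (θ : ℝ) (ξ : Euc n) : ℝ :=
  Real.sin θ ^ 2 + Real.cos θ * ⟪ξ, eVec n⟫

/-- `‖f‖_{C⁰(C_θ)} ≤ K`. -/
def CZeroNormLe (n : ℕ) (θ : ℝ) (f : Euc n → ℝ) (K : ℝ) : Prop :=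
  ∀ ξ ∈ cap n θ, |f ξ| ≤ K

/-- `‖f‖_{C¹(C_θ)} ≤ K`. -/
def COneNormLe (n : ℕ) (θ : ℝ) (f : Euc n → ℝ) (K : ℝ) : Prop :=
  CZeroNormLe n θ f K ∧ ∀ ξ ∈ cap n θ, ‖sgrad n θ f ξ‖ ≤ K

/-- `‖f‖_{C²(C_θ)} ≤ K`. -/
def CTwoNormLe (n : ℕ) (θ : ℝ) (f : Euc n → ℝ) (K : ℝ) : Prop :=
  COneNormLe n θ f K ∧
    ∀ ξ ∈ cap n θ, ∀ X Y : Euc n, IsTangent n θ ξ X → IsTangent n θ ξ Y →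
      |shess n θ f ξ X Y| ≤ K * ‖X‖ * ‖Y‖

/-- The linearized operator `L_h(γ)` of the equation `𝒢(∇²h,h) = 𝒥₁(∇h,h)` at `h`:
the derivative at `ε = 0` of `𝒢 - 𝒥₁` along the variation `h_ε = h·e^{εγ}`
(cf. equation (5.4) of the paper, which is exactly this derivative). -/
def linOp (n : ℕ) (θ p q : ℝ) (f h γ : Euc n → ℝ) (ξ : Euc n) : ℝ :=
  deriv (fun ε : ℝ =>
    sdet n θ (fun x => h x * Real.exp (ε * γ x)) ξ
      - eqRHS n θ p q f (fun x => h x * Real.exp (ε * γ x)) ξ) 0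

/-- Endomorphism acting as `l·∇²u + cos θ·(∇u ⊗ e^T + e^T ⊗ ∇u) + uσ` on the tangent space
and as the identity on the normal line. -/
def capillaryOp (n : ℕ) (θ : ℝ) (u : Euc n → ℝ) (ξ : Euc n) : Euc n →L[ℝ] Euc n :=
  lFun n θ ξ • thessOp n θ u ξ
    + Real.cos θ • ((innerSL ℝ (sgrad n θ u ξ)).smulRight (tproj n θ ξ (eVec n))
        + (innerSL ℝ (tproj n θ ξ (eVec n))).smulRight (sgrad n θ u ξ))
    + u ξ • tproj n θ ξ + normalPart n θ ξ

/-- Endomorphism acting as `∇²v + ∇v ⊗ ∇v + σ` on the tangent space and as the identity on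
the normal line. -/
def logOp (n : ℕ) (θ : ℝ) (v : Euc n → ℝ) (ξ : Euc n) : Euc n →L[ℝ] Euc n :=
  thessOp n θ v ξ + (innerSL ℝ (sgrad n θ v ξ)).smulRight (sgrad n θ v ξ)
    + tproj n θ ξ + normalPart n θ ξ

/-- Geodesic distance on `C_θ` from `ξ` to the top point `N = (0,…,0,1-cos θ)`
(for `θ ∈ (0,π/2)` the cap is geodesically convex, so this is `arccos ⟨ν(ξ), ν(N)⟩`). -/
def distToTop (n : ℕ) (θ : ℝ) (ξ : Euc n) : ℝ :=
  Real.arccos (ξ (Fin.last n) + Real.cos θ)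

/-- The function `d := d_N²/(2θ)`. -/
def dCap (n : ℕ) (θ : ℝ) (ξ : Euc n) : ℝ := distToTop n θ ξ ^ 2 / (2 * θ)
section AuxGradEst

open InnerProductSpace

private lemma inner_eVec_self (n : ℕ) : ⟪eVec n, eVec n⟫ = 1 := by
  simp [eVec, real_inner_self_eq_norm_sq, EuclideanSpace.norm_single]

private lemma inner_eVec (n : ℕ) (x : Euc n) : ⟪x, eVec n⟫ = -(x (Fin.last n)) := by
  simp [eVec, inner_neg_right, EuclideanSpace.inner_single_right]

private lemma cap_isCompact (n : ℕ) (θ : ℝ) : IsCompact (cap n θ) := by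
  have hcl : IsClosed (cap n θ) := by
    apply IsClosed.inter
    · exact isClosed_le continuous_const ((EuclideanSpace.proj (Fin.last n)).continuous)
    · exact isClosed_eq (continuous_norm.comp
        (by unfold sphNormal; fun_prop : Continuous (sphNormal n θ))) continuous_const
  have hbd : Bornology.IsBounded (cap n θ) := by
    apply Bornology.IsBounded.subset (Metric.isBounded_closedBall (x := (0 : Euc n)) (r := 2))
    intro x hx
    have h1 : ‖sphNormal n θ x‖ = 1 := hx.2
    have : ‖x‖ ≤ 2 := by
      have := norm_sub_norm_le x (Real.cos θ • eVec n)
      have h2 : ‖Real.cos θ • eVec n‖ ≤ 1 := by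
        rw [norm_smul]
        have : ‖eVec n‖ = 1 := by simp [eVec, EuclideanSpace.norm_single]
        rw [this]
        simpa using abs_cos_le_one θ
      rw [show x - Real.cos θ • eVec n = sphNormal n θ x from rfl, h1] at this
      linarith
    simpa [Metric.mem_closedBall] using this
  exact Metric.isCompact_of_isClosed_isBounded hcl hbd

private lemma cap_nonempty' (n : ℕ) (θ : ℝ) : (cap n θ).Nonempty := by
  refine ⟨(1 - Real.cos θ) • EuclideanSpace.single (Fin.last n) (1 : ℝ), ?_, ?_⟩
  · have := Real.cos_le_one θ
    simp only [PiLp.smul_apply, EuclideanSpace.single_apply, if_pos rfl, smul_eq_mul, mul_one]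
    simp only [if_true]
    linarith
  · have : sphNormal n θ ((1 - Real.cos θ) • EuclideanSpace.single (Fin.last n) (1 : ℝ))
        = EuclideanSpace.single (Fin.last n) (1 : ℝ) := by
      simp [sphNormal, eVec, smul_smul]
      module
    rw [this, EuclideanSpace.norm_single]
    simp

/-- `sgrad` explicitly. -/
private lemma sgrad_apply (n : ℕ) (θ : ℝ) (h : Euc n → ℝ) (ξ : Euc n) :
    sgrad n θ h ξ = gradient h ξ
      - ⟪sphNormal n θ ξ, gradient h ξ⟫ • sphNormal n θ ξ := by
  simp [sgrad, tproj, ContinuousLinearMap.sub_apply, ContinuousLinearMap.smulRight_apply]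

private lemma gradient_contDiff {n : ℕ} {h : Euc n → ℝ} (hh : ContDiff ℝ 2 h) :
    ContDiff ℝ 1 (gradient h) := by
  have : gradient h = fun x => (toDual ℝ (Euc n)).symm (fderiv ℝ h x) := rfl
  rw [this]
  exact (LinearIsometryEquiv.contDiff _).comp (hh.fderiv_right (by norm_num))

private lemma inner_gradient {n : ℕ} {h : Euc n → ℝ} (x y : Euc n) :
    ⟪gradient h x, y⟫ = fderiv ℝ h x y := by
  rw [gradient, InnerProductSpace.toDual_symm_apply]

/-- Symmetry of the ambient Hessian. -/
private lemma hess_symm {n : ℕ} {h : Euc n → ℝ} (hh : ContDiff ℝ 2 h) (x u v : Euc n) :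
    ⟪fderiv ℝ (gradient h) x u, v⟫ = ⟪fderiv ℝ (gradient h) x v, u⟫ := by
  have hd1 : Differentiable ℝ (fderiv ℝ h) :=
    (hh.fderiv_right (m := 1) (by norm_num)).differentiable (by norm_num)
  have hgr : gradient h = (⇑(toDual ℝ (Euc n)).symm) ∘ (fderiv ℝ h) := rfl
  have hfd : fderiv ℝ (gradient h) x
      = (((toDual ℝ (Euc n)).symm.toLinearEquiv.toContinuousLinearEquiv :
          StrongDual ℝ (Euc n) →L[ℝ] Euc n)).comp (fderiv ℝ (fderiv ℝ h) x) := by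
    rw [hgr]
    exact (toDual ℝ (Euc n)).symm.comp_fderiv
  have hsymm : ∀ u v : Euc n, fderiv ℝ (fderiv ℝ h) x u v = fderiv ℝ (fderiv ℝ h) x v u := by
    intro u v
    exact second_derivative_symmetric
      (f := h) (f' := fderiv ℝ h)
      (fun y => ((hh.differentiable (by norm_num)) y).hasFDerivAt)
      ((hd1 x).hasFDerivAt) u v
  rw [hfd]
  simp only [ContinuousLinearMap.comp_apply]
  have key : ∀ w y : Euc n,
      ⟪((toDual ℝ (Euc n)).symm.toLinearEquiv.toContinuousLinearEquiv :
          StrongDual ℝ (Euc n) →L[ℝ] Euc n) (fderiv ℝ (fderiv ℝ h) x w), y⟫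
        = fderiv ℝ (fderiv ℝ h) x w y := by
    intro w y
    exact InnerProductSpace.toDual_symm_apply
  rw [key, key, hsymm]

end AuxGradEst
section AuxGradEst2

open InnerProductSpace

/-- The ambient function representing `h² + |∇h|²` on the cap. -/
private def Qfun (n : ℕ) (θ : ℝ) (h : Euc n → ℝ) (x : Euc n) : ℝ :=
  h x ^ 2 + ⟪gradient h x, gradient h x⟫ - ⟪sphNormal n θ x, gradient h x⟫ ^ 2

private lemma norm_eq_one_of_inner {n : ℕ} {y : Euc n} (hy : ⟪y, y⟫ = 1) : ‖y‖ = 1 := by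
  have h1 : ‖y‖ * ‖y‖ = 1 := by rw [← real_inner_self_eq_norm_mul_norm]; exact hy
  nlinarith [norm_nonneg y]

private lemma inner_eq_one_of_norm {n : ℕ} {y : Euc n} (hy : ‖y‖ = 1) : ⟪y, y⟫ = 1 := by
  rw [real_inner_self_eq_norm_mul_norm, hy]; norm_num

/-- Derivative of `h ∘ c` along a curve. -/
private lemma hasDerivAt_comp_h {n : ℕ} {h : Euc n → ℝ} (hh : ContDiff ℝ 2 h)
    {c : ℝ → Euc n} {z : Euc n} (hc : HasDerivAt c z 0) :
    HasDerivAt (fun s => h (c s)) ⟪gradient h (c 0), z⟫ 0 := by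
  have := (((hh.differentiable (by norm_num)) (c 0)).hasFDerivAt).comp_hasDerivAt 0 hc
  rwa [inner_gradient]

/-- Derivative of `gradient h ∘ c` along a curve. -/
private lemma hasDerivAt_comp_grad {n : ℕ} {h : Euc n → ℝ} (hh : ContDiff ℝ 2 h)
    {c : ℝ → Euc n} {z : Euc n} (hc : HasDerivAt c z 0) :
    HasDerivAt (fun s => gradient h (c s)) (fderiv ℝ (gradient h) (c 0) z) 0 :=
  ((((gradient_contDiff hh).differentiable (by norm_num)) (c 0)).hasFDerivAt).comp_hasDerivAt 0 hc

private lemma hasDerivAt_comp_nu {n : ℕ} (θ : ℝ)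
    {c : ℝ → Euc n} {z : Euc n} (hc : HasDerivAt c z 0) :
    HasDerivAt (fun s => sphNormal n θ (c s)) z 0 := by
  unfold sphNormal
  exact hc.sub_const _

/-- Derivative of `Qfun ∘ c` along a curve. -/
private lemma hasDerivAt_Q {n : ℕ} (θ : ℝ) {h : Euc n → ℝ} (hh : ContDiff ℝ 2 h)
    {c : ℝ → Euc n} {z : Euc n} (hc : HasDerivAt c z 0) :
    HasDerivAt (fun s => Qfun n θ h (c s))
      (2 * (h (c 0) * ⟪gradient h (c 0), z⟫
        + ⟪fderiv ℝ (gradient h) (c 0) z, gradient h (c 0)⟫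
        - ⟪sphNormal n θ (c 0), gradient h (c 0)⟫ *
            (⟪z, gradient h (c 0)⟫ + ⟪sphNormal n θ (c 0), fderiv ℝ (gradient h) (c 0) z⟫))) 0 := by
  have h1 := hasDerivAt_comp_h hh hc
  have h2 := hasDerivAt_comp_grad hh hc
  have h3 := hasDerivAt_comp_nu θ hc
  have hA : HasDerivAt (fun s => h (c s) ^ 2)
      (2 * h (c 0) * ⟪gradient h (c 0), z⟫) 0 := by
    simpa using h1.fun_pow 2
  have hB : HasDerivAt (fun s => ⟪gradient h (c s), gradient h (c s)⟫)
      (⟪gradient h (c 0), fderiv ℝ (gradient h) (c 0) z⟫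
        + ⟪fderiv ℝ (gradient h) (c 0) z, gradient h (c 0)⟫) 0 := h2.inner ℝ h2
  have hC : HasDerivAt (fun s => ⟪sphNormal n θ (c s), gradient h (c s)⟫ ^ 2)
      (2 * ⟪sphNormal n θ (c 0), gradient h (c 0)⟫
        * (⟪sphNormal n θ (c 0), fderiv ℝ (gradient h) (c 0) z⟫ + ⟪z, gradient h (c 0)⟫)) 0 := by
    simpa using (h3.inner ℝ h2).fun_pow 2
  have := (hA.fun_add hB).fun_sub hC
  refine this.congr_deriv ?_
  rw [real_inner_comm (gradient h (c 0)) (fderiv ℝ (gradient h) (c 0) z)]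
  ring

end AuxGradEst2
section AuxGradEst3

open InnerProductSpace

variable {n : ℕ} {θ : ℝ}

private lemma capBdry_subset_cap : capBdry n θ ⊆ cap n θ := by
  intro x hx; exact ⟨le_of_eq hx.1.symm, hx.2⟩

private lemma bdry_inner_e {x₀ : Euc n} (hx : x₀ ∈ capBdry n θ) : ⟪x₀, eVec n⟫ = 0 := by
  rw [inner_eVec, hx.1, neg_zero]

private lemma sin_ne (hθ : θ ∈ Set.Ioo 0 π) : Real.sin θ ≠ 0 :=
  ne_of_gt (Real.sin_pos_of_pos_of_lt_pi hθ.1 hθ.2)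

private lemma sin_cot (hθ : θ ∈ Set.Ioo 0 π) : Real.sin θ * Real.cot θ = Real.cos θ := by
  rw [Real.cot_eq_cos_div_sin, mul_comm, div_mul_cancel₀ _ (sin_ne hθ)]

private lemma bdry_inner_self (hθ : θ ∈ Set.Ioo 0 π) {x₀ : Euc n} (hx : x₀ ∈ capBdry n θ) :
    ⟪x₀, x₀⟫ = Real.sin θ ^ 2 := by
  have h1 : ⟪sphNormal n θ x₀, sphNormal n θ x₀⟫ = 1 := inner_eq_one_of_norm hx.2
  have he := bdry_inner_e hx
  have he' : ⟪eVec n, x₀⟫ = 0 := by rw [real_inner_comm]; exact he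
  have hee := inner_eVec_self n
  simp only [sphNormal, inner_sub_left, inner_sub_right, real_inner_smul_left,
    real_inner_smul_right, he, he', hee] at h1
  nlinarith [Real.sin_sq_add_cos_sq θ]

private lemma bdry_nu_mu (hθ : θ ∈ Set.Ioo 0 π) {x₀ : Euc n} (hx : x₀ ∈ capBdry n θ) :
    ⟪sphNormal n θ x₀, conormal n θ x₀⟫ = 0 := by
  have he := bdry_inner_e hx
  have he' : ⟪eVec n, x₀⟫ = 0 := by rw [real_inner_comm]; exact he
  have hee := inner_eVec_self n
  have hxx := bdry_inner_self hθ hx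
  have hsc := sin_cot hθ
  simp only [sphNormal, conormal, inner_sub_left, inner_add_right, real_inner_smul_left,
    real_inner_smul_right, he, he', hee, hxx]
  linear_combination (Real.sin θ) * hsc

private lemma bdry_mu_mu (hθ : θ ∈ Set.Ioo 0 π) {x₀ : Euc n} (hx : x₀ ∈ capBdry n θ) :
    ⟪conormal n θ x₀, conormal n θ x₀⟫ = 1 := by
  have he := bdry_inner_e hx
  have he' : ⟪eVec n, x₀⟫ = 0 := by rw [real_inner_comm]; exact he
  have hee := inner_eVec_self n
  have hxx := bdry_inner_self hθ hx
  have hsc := sin_cot hθ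
  have hpy := Real.sin_sq_add_cos_sq θ
  have hs := sin_ne hθ
  simp only [conormal, inner_add_left, inner_add_right, real_inner_smul_left,
    real_inner_smul_right, he, he', hee, hxx]
  have hcot : Real.cot θ = Real.cos θ / Real.sin θ := Real.cot_eq_cos_div_sin θ
  rw [hcot]
  field_simp
  nlinarith [hpy]

private lemma bdry_inner_eVec_eq (hθ : θ ∈ Set.Ioo 0 π) {x₀ : Euc n} (hx : x₀ ∈ capBdry n θ)
    (y : Euc n) :
    ⟪y, eVec n⟫ = Real.sin θ * ⟪y, conormal n θ x₀⟫ - Real.cos θ * ⟪y, sphNormal n θ x₀⟫ := by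
  have hsc := sin_cot hθ
  have hpy := Real.sin_sq_add_cos_sq θ
  simp only [conormal, sphNormal, inner_add_right, inner_sub_right, real_inner_smul_right]
  linear_combination (-⟪y, x₀⟫) * hsc + (-⟪y, eVec n⟫) * hpy

/-- The boundary circle curve stays in `capBdry`. -/
private lemma bdryCurve_mem (hθ : θ ∈ Set.Ioo 0 π) {x₀ z : Euc n} (hx : x₀ ∈ capBdry n θ)
    (hz1 : ⟪x₀, z⟫ = 0) (hz2 : ⟪z, eVec n⟫ = 0) (hzz : ⟪z, z⟫ = Real.sin θ ^ 2) (s : ℝ) :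
    (Real.cos s • x₀ + Real.sin s • z) ∈ capBdry n θ := by
  have he := bdry_inner_e hx
  have he' : ⟪eVec n, x₀⟫ = 0 := by rw [real_inner_comm]; exact he
  have hz1' : ⟪z, x₀⟫ = 0 := by rw [real_inner_comm]; exact hz1
  have hz2' : ⟪eVec n, z⟫ = 0 := by rw [real_inner_comm]; exact hz2
  have hxx := bdry_inner_self hθ hx
  have hee := inner_eVec_self n
  constructor
  · have h0 : ⟪Real.cos s • x₀ + Real.sin s • z, eVec n⟫ = 0 := by
      simp only [inner_add_left, real_inner_smul_left, he, hz2]; ring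
    rw [inner_eVec] at h0
    linarith
  · apply norm_eq_one_of_inner
    simp only [sphNormal, inner_sub_left, inner_sub_right, inner_add_left, inner_add_right,
      real_inner_smul_left, real_inner_smul_right, he, he', hee, hxx, hz1, hz1', hz2, hz2', hzz]
    nlinarith [Real.sin_sq_add_cos_sq θ, Real.sin_sq_add_cos_sq s]

end AuxGradEst3
section AuxGradEst4

open InnerProductSpace

variable {n : ℕ} {θ : ℝ}

private lemma circleCurve_hasDerivAt (x₀ z : Euc n) :
    HasDerivAt (fun s : ℝ => Real.cos s • x₀ + Real.sin s • z) z 0 := by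
  have := ((Real.hasDerivAt_cos 0).smul_const x₀).fun_add ((Real.hasDerivAt_sin 0).smul_const z)
  simpa using this

private lemma circleCurve_zero (x₀ z : Euc n) :
    (fun s : ℝ => Real.cos s • x₀ + Real.sin s • z) 0 = x₀ := by simp

/-- Differentiating the Robin boundary condition along the boundary yields
`∇²h(z, μ) = 0` for boundary-tangential `z`. -/
private lemma hess_mu_zero (hθ : θ ∈ Set.Ioo 0 π) {h : Euc n → ℝ} (hh : ContDiff ℝ 2 h)
    (hR : RobinBC n θ h) {x₀ z : Euc n} (hx : x₀ ∈ capBdry n θ)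
    (hz1 : ⟪x₀, z⟫ = 0) (hz2 : ⟪z, eVec n⟫ = 0) (hzz : ⟪z, z⟫ = Real.sin θ ^ 2) :
    ⟪fderiv ℝ (gradient h) x₀ z, conormal n θ x₀⟫ = 0 := by
  set c : ℝ → Euc n := fun s => Real.cos s • x₀ + Real.sin s • z with hcdef
  have hc : HasDerivAt c z 0 := circleCurve_hasDerivAt x₀ z
  have hc0 : c 0 = x₀ := circleCurve_zero x₀ z
  have hm : HasDerivAt (fun s => conormal n θ (c s)) (Real.cot θ • z) 0 := by
    have he : (fun s => conormal n θ (c s))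
        = fun s => Real.cot θ • c s + Real.sin θ • eVec n := rfl
    rw [he]
    exact (hc.fun_const_smul (Real.cot θ)).add_const _
  have hG := hasDerivAt_comp_grad hh hc
  have hν := hasDerivAt_comp_nu θ hc
  have hhc := hasDerivAt_comp_h hh hc
  have hd1 := ((hG.inner ℝ hm).fun_sub ((hν.inner ℝ hG).fun_mul (hν.inner ℝ hm)))
  have heq : (fun s => ⟪gradient h (c s), conormal n θ (c s)⟫
        - ⟪sphNormal n θ (c s), gradient h (c s)⟫ * ⟪sphNormal n θ (c s), conormal n θ (c s)⟫)
      = fun s => Real.cot θ * h (c s) := by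
    funext s
    have hmem : c s ∈ capBdry n θ := bdryCurve_mem hθ hx hz1 hz2 hzz s
    have hrr := hR (c s) hmem
    rw [sgrad_apply] at hrr
    rw [inner_sub_left, real_inner_smul_left] at hrr
    exact hrr
  rw [heq] at hd1
  have hd2 : HasDerivAt (fun s => Real.cot θ * h (c s)) (Real.cot θ * ⟪gradient h (c 0), z⟫) 0 :=
    hhc.const_mul _
  have hD := hd1.unique hd2
  rw [hc0] at hD
  -- simplify using boundary geometry
  have h1 : ⟪sphNormal n θ x₀, conormal n θ x₀⟫ = 0 := bdry_nu_mu hθ hx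
  have h2 : ⟪z, conormal n θ x₀⟫ = 0 := by
    have hz1' : ⟪z, x₀⟫ = 0 := by rw [real_inner_comm]; exact hz1
    simp only [conormal, inner_add_right, real_inner_smul_right, hz1', hz2]
    ring
  have h3 : ⟪sphNormal n θ x₀, z⟫ = 0 := by
    have hz2' : ⟪eVec n, z⟫ = 0 := by rw [real_inner_comm]; exact hz2
    simp only [sphNormal, inner_sub_left, real_inner_smul_left, hz1, hz2']
    ring
  rw [real_inner_smul_right, real_inner_smul_right, h1, h2, h3] at hD
  linarith [hD]

end AuxGradEst4
section AuxGradEst5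

open InnerProductSpace Filter Topology

variable {n : ℕ} {θ : ℝ}

private lemma cap_nu_inner {x : Euc n} (hx : x ∈ cap n θ) :
    ⟪sphNormal n θ x, sphNormal n θ x⟫ = 1 := inner_eq_one_of_norm hx.2

private lemma sgrad_tangent {h : Euc n → ℝ} {x : Euc n} (hx : x ∈ cap n θ) :
    ⟪sphNormal n θ x, sgrad n θ h x⟫ = 0 := by
  rw [sgrad_apply, inner_sub_right, real_inner_smul_right, cap_nu_inner hx]
  ring

private lemma Qfun_eq {h : Euc n → ℝ} {x : Euc n} (hx : x ∈ cap n θ) :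
    Qfun n θ h x = h x ^ 2 + ⟪sgrad n θ h x, sgrad n θ h x⟫ := by
  rw [sgrad_apply]
  simp only [Qfun, inner_sub_left, inner_sub_right, real_inner_smul_left,
    real_inner_smul_right, cap_nu_inner hx]
  rw [real_inner_comm (gradient h x) (sphNormal n θ x)]
  ring

/-- The first-order condition at a maximum point of `Q` along a curve in the cap. -/
private lemma maxpt_relation {h : Euc n → ℝ} (hh : ContDiff ℝ 2 h) {x₀ : Euc n}
    (hmax : IsMaxOn (Qfun n θ h) (cap n θ) x₀)
    {c : ℝ → Euc n} {z : Euc n} (hc : HasDerivAt c z 0) (hc0 : c 0 = x₀)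
    (hmem : ∀ᶠ s in 𝓝 (0 : ℝ), c s ∈ cap n θ)
    (hz : ⟪sphNormal n θ x₀, z⟫ = 0) :
    ⟪fderiv ℝ (gradient h) x₀ z, sgrad n θ h x₀⟫
      - ⟪gradient h x₀, sphNormal n θ x₀⟫ * ⟪z, sgrad n θ h x₀⟫
      + h x₀ * ⟪z, sgrad n θ h x₀⟫ = 0 := by
  have hd := hasDerivAt_Q θ hh hc
  rw [hc0] at hd
  have hloc : IsLocalMax (fun s => Qfun n θ h (c s)) 0 := by
    apply hmem.mono
    intro s hs
    have : Qfun n θ h (c s) ≤ Qfun n θ h x₀ := hmax hs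
    simpa [hc0] using this
  have hval : (2 : ℝ) * (h x₀ * ⟪gradient h x₀, z⟫
        + ⟪fderiv ℝ (gradient h) x₀ z, gradient h x₀⟫
        - ⟪sphNormal n θ x₀, gradient h x₀⟫ *
            (⟪z, gradient h x₀⟫ + ⟪sphNormal n θ x₀, fderiv ℝ (gradient h) x₀ z⟫)) = 0 := by
    rw [← hd.deriv]
    exact hloc.deriv_eq_zero
  have c1 : ⟪z, sphNormal n θ x₀⟫ = 0 := by rw [real_inner_comm]; exact hz
  rw [sgrad_apply]
  rw [inner_sub_right, inner_sub_right, real_inner_smul_right,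
    real_inner_smul_right, c1,
    show ⟪fderiv ℝ (gradient h) x₀ z, sphNormal n θ x₀⟫
      = ⟪sphNormal n θ x₀, fderiv ℝ (gradient h) x₀ z⟫ from real_inner_comm _ _,
    show ⟪gradient h x₀, sphNormal n θ x₀⟫
      = ⟪sphNormal n θ x₀, gradient h x₀⟫ from real_inner_comm _ _,
    show ⟪fderiv ℝ (gradient h) x₀ z, gradient h x₀⟫
      = ⟪gradient h x₀, fderiv ℝ (gradient h) x₀ z⟫ from real_inner_comm _ _]
  rw [show ⟪gradient h x₀, z⟫ = ⟪z, gradient h x₀⟫ from real_inner_comm _ _,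
    show ⟪fderiv ℝ (gradient h) x₀ z, gradient h x₀⟫
      = ⟪gradient h x₀, fderiv ℝ (gradient h) x₀ z⟫ from real_inner_comm _ _] at hval
  linear_combination hval / 2

end AuxGradEst5
set_option maxHeartbeats 1600000 in
/-- Lemma 3.2, `C¹` estimate: for a positive convex `h` satisfying the
Robin boundary condition, `max_{C_θ} |∇h| ≤ (1 + cot²θ)^{1/2}·max_{C_θ} h`;
this uses only convexity and the boundary condition, not the equation. -/
theorem gradient_estimate_from_convexity
    (n : ℕ) (hn : 1 ≤ n) (θ : ℝ) (hθ : θ ∈ Set.Ioo 0 π)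
    (h : Euc n → ℝ) (hh : ContDiff ℝ 2 h) (hpos : PosOnCap n θ h)
    (hconv : IsConvexSol n θ h) (hR : RobinBC n θ h) :
    ∀ ξ ∈ cap n θ,
      ‖sgrad n θ h ξ‖ ≤ Real.sqrt (1 + Real.cot θ ^ 2) * sSup (h '' cap n θ) := by
  intro ξ hξ
  set M := sSup (h '' cap n θ) with hMdef
  have hcomp := cap_isCompact n θ
  have hne := cap_nonempty' n θ
  have hQcont : ContinuousOn (Qfun n θ h) (cap n θ) := by
    have hgc : Continuous (gradient h) := (gradient_contDiff hh).continuous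
    have hνc : Continuous (sphNormal n θ) := by unfold sphNormal; fun_prop
    have hhc : Continuous h := hh.continuous
    exact (((hhc.pow 2).add (hgc.inner hgc)).sub ((hνc.inner hgc).pow 2)).continuousOn
  obtain ⟨x₀, hx₀, hmax⟩ := hcomp.exists_isMaxOn hne hQcont
  have hbdd : BddAbove (h '' cap n θ) := hcomp.bddAbove_image hh.continuous.continuousOn
  have hle : ∀ x ∈ cap n θ, h x ≤ M := fun x hx => le_csSup hbdd (Set.mem_image_of_mem h hx)
  have hM0 : 0 < M := by
    obtain ⟨x1, hx1⟩ := hne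
    exact lt_of_lt_of_le (hpos x1 hx1) (hle x1 hx1)
  obtain ⟨g, hgdef⟩ : ∃ g, g = sgrad n θ h x₀ := ⟨_, rfl⟩
  have hgν : ⟪sphNormal n θ x₀, g⟫ = 0 := by rw [hgdef]; exact sgrad_tangent hx₀
  have hkey : Qfun n θ h x₀ ≤ (1 + Real.cot θ ^ 2) * M ^ 2 := by
    rcases lt_or_eq_of_le hx₀.1 with hint | hbd0
    · -- interior maximum point : the gradient vanishes
      have hg0 : g = 0 := by
        by_contra hg
        have hgn : ‖g‖ ≠ 0 := norm_ne_zero_iff.mpr hg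
        obtain ⟨w, hwdef⟩ : ∃ w : Euc n, w = ‖g‖⁻¹ • g := ⟨_, rfl⟩
        have hww : ⟪w, w⟫ = 1 := by
          rw [hwdef, real_inner_smul_left, real_inner_smul_right,
            real_inner_self_eq_norm_sq]
          field_simp
        have hνw : ⟪sphNormal n θ x₀, w⟫ = 0 := by
          rw [hwdef, real_inner_smul_right, hgν, mul_zero]
        obtain ⟨γ, hγdef⟩ : ∃ γ : ℝ → Euc n,
            γ = fun s => Real.cos θ • eVec n
              + (Real.cos s • sphNormal n θ x₀ + Real.sin s • w) := ⟨_, rfl⟩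
        have hγ0 : γ 0 = x₀ := by
          rw [hγdef]
          simp only [Real.cos_zero, Real.sin_zero, one_smul, zero_smul, add_zero, sphNormal]
          abel
        have hγd : HasDerivAt γ w 0 := by
          rw [hγdef]
          exact (circleCurve_hasDerivAt (sphNormal n θ x₀) w).const_add (Real.cos θ • eVec n)
        have hγsph : ∀ s, sphNormal n θ (γ s)
            = Real.cos s • sphNormal n θ x₀ + Real.sin s • w := by
          intro s
          rw [hγdef]
          show Real.cos θ • eVec n + (Real.cos s • sphNormal n θ x₀ + Real.sin s • w)
              - Real.cos θ • eVec n = _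
          abel
        have hγnorm : ∀ s, ‖sphNormal n θ (γ s)‖ = 1 := by
          intro s
          apply norm_eq_one_of_inner
          rw [hγsph s]
          simp only [inner_add_left, inner_add_right, real_inner_smul_left,
            real_inner_smul_right, cap_nu_inner hx₀, hww, hνw,
            show ⟪w, sphNormal n θ x₀⟫ = 0 from by rw [real_inner_comm]; exact hνw]
          nlinarith [Real.sin_sq_add_cos_sq s]
        have hγcont : Continuous γ := by
          rw [hγdef]
          exact continuous_const.add ((Real.continuous_cos.smul continuous_const).add
            (Real.continuous_sin.smul continuous_const))
        have hfcont : Continuous (fun s => (γ s) (Fin.last n)) :=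
          (EuclideanSpace.proj (Fin.last n)).continuous.comp hγcont
        have hf0 : 0 < (γ 0) (Fin.last n) := by rw [hγ0]; exact hint
        have hev : ∀ᶠ s in nhds (0 : ℝ), γ s ∈ cap n θ := by
          filter_upwards [hfcont.continuousAt.preimage_mem_nhds (Ioi_mem_nhds hf0)] with s hs
          exact ⟨le_of_lt hs, hγnorm s⟩
        have hrel := maxpt_relation hh hmax hγd hγ0 hev hνw
        rw [← hgdef, hwdef, (fderiv ℝ (gradient h) x₀).map_smul, real_inner_smul_left,
          real_inner_smul_left] at hrel
        have hker : ‖g‖⁻¹ * (⟪fderiv ℝ (gradient h) x₀ g, g⟫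
            - ⟪gradient h x₀, sphNormal n θ x₀⟫ * ⟪g, g⟫ + h x₀ * ⟪g, g⟫) = 0 := by
          linarith [hrel]
        have hrel2 := (mul_eq_zero.mp hker).resolve_left (inv_ne_zero hgn)
        have hcv := hconv x₀ hx₀ g (by rw [IsTangent, real_inner_comm]; exact hgν) hg
        rw [shess] at hcv
        linarith [hcv, hrel2]
      rw [Qfun_eq hx₀, ← hgdef, hg0]
      simp only [inner_zero_left, add_zero]
      have h1 : h x₀ ^ 2 ≤ M ^ 2 := by nlinarith [hpos x₀ hx₀, hle x₀ hx₀]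
      nlinarith [sq_nonneg (Real.cot θ), sq_nonneg M]
    · -- boundary maximum point
      have hxbd : x₀ ∈ capBdry n θ := ⟨hbd0.symm, hx₀.2⟩
      have hgmu : ⟪g, conormal n θ x₀⟫ = Real.cot θ * h x₀ := by
        rw [hgdef]; exact hR x₀ hxbd
      have hμν : ⟪sphNormal n θ x₀, conormal n θ x₀⟫ = 0 := bdry_nu_mu hθ hxbd
      have hμμ : ⟪conormal n θ x₀, conormal n θ x₀⟫ = 1 := bdry_mu_mu hθ hxbd
      obtain ⟨v, hvdef⟩ : ∃ v : Euc n,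
          v = g - (Real.cot θ * h x₀) • conormal n θ x₀ := ⟨_, rfl⟩
      have hvmu : ⟪v, conormal n θ x₀⟫ = 0 := by
        rw [hvdef, inner_sub_left, real_inner_smul_left, hgmu, hμμ]; ring
      have hvν : ⟪sphNormal n θ x₀, v⟫ = 0 := by
        rw [hvdef, inner_sub_right, real_inner_smul_right, hgν, hμν]; ring
      have hve : ⟪v, eVec n⟫ = 0 := by
        rw [bdry_inner_eVec_eq hθ hxbd v, hvmu,
          show ⟪v, sphNormal n θ x₀⟫ = 0 from by rw [real_inner_comm]; exact hvν]
        ring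
      have hvx : ⟪x₀, v⟫ = 0 := by
        have hexp : ⟪sphNormal n θ x₀, v⟫ = ⟪x₀, v⟫ - Real.cos θ * ⟪eVec n, v⟫ := by
          rw [show sphNormal n θ x₀ = x₀ - Real.cos θ • eVec n from rfl,
            inner_sub_left, real_inner_smul_left]
        rw [hvν] at hexp
        rw [show ⟪eVec n, v⟫ = 0 from by rw [real_inner_comm]; exact hve] at hexp
        linarith
      have hv0 : v = 0 := by
        by_contra hv
        have hvn : ‖v‖ ≠ 0 := norm_ne_zero_iff.mpr hv
        have hk : Real.sin θ / ‖v‖ ≠ 0 := div_ne_zero (sin_ne hθ) hvn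
        obtain ⟨z, hzdef⟩ : ∃ z : Euc n, z = (Real.sin θ / ‖v‖) • v := ⟨_, rfl⟩
        have hz1 : ⟪x₀, z⟫ = 0 := by rw [hzdef, real_inner_smul_right, hvx, mul_zero]
        have hz2 : ⟪z, eVec n⟫ = 0 := by rw [hzdef, real_inner_smul_left, hve, mul_zero]
        have hzz : ⟪z, z⟫ = Real.sin θ ^ 2 := by
          rw [hzdef, real_inner_smul_left, real_inner_smul_right,
            real_inner_self_eq_norm_sq]
          field_simp
        have hHzμ := hess_mu_zero hθ hh hR hxbd hz1 hz2 hzz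
        have hHvμ : ⟪fderiv ℝ (gradient h) x₀ v, conormal n θ x₀⟫ = 0 := by
          rw [hzdef, (fderiv ℝ (gradient h) x₀).map_smul, real_inner_smul_left] at hHzμ
          exact (mul_eq_zero.mp hHzμ).resolve_left hk
        have hνz : ⟪sphNormal n θ x₀, z⟫ = 0 := by
          rw [hzdef, real_inner_smul_right, hvν, mul_zero]
        have hmem : ∀ᶠ s in nhds (0 : ℝ),
            (Real.cos s • x₀ + Real.sin s • z) ∈ cap n θ :=
          Filter.Eventually.of_forall fun s =>
            capBdry_subset_cap (bdryCurve_mem hθ hxbd hz1 hz2 hzz s)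
        have hrel := maxpt_relation hh hmax (circleCurve_hasDerivAt x₀ z)
          (circleCurve_zero x₀ z) hmem hνz
        rw [← hgdef, hzdef, (fderiv ℝ (gradient h) x₀).map_smul, real_inner_smul_left,
          real_inner_smul_left] at hrel
        have hker : (Real.sin θ / ‖v‖) * (⟪fderiv ℝ (gradient h) x₀ v, g⟫
            - ⟪gradient h x₀, sphNormal n θ x₀⟫ * ⟪v, g⟫ + h x₀ * ⟪v, g⟫) = 0 := by
          linarith [hrel]
        have hrel2 := (mul_eq_zero.mp hker).resolve_left hk
        have hgv : g = v + (Real.cot θ * h x₀) • conormal n θ x₀ := by rw [hvdef]; abel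
        have hvg : ⟪v, g⟫ = ⟪v, v⟫ := by
          rw [hgv, inner_add_right, real_inner_smul_right, hvmu]; ring
        have hHvg : ⟪fderiv ℝ (gradient h) x₀ v, g⟫
            = ⟪fderiv ℝ (gradient h) x₀ v, v⟫ := by
          rw [hgv, inner_add_right, real_inner_smul_right, hHvμ]; ring
        rw [hvg, hHvg] at hrel2
        have hcv := hconv x₀ hx₀ v (by rw [IsTangent, real_inner_comm]; exact hvν) hv
        rw [shess] at hcv
        linarith [hcv, hrel2]
      have hga : g = (Real.cot θ * h x₀) • conormal n θ x₀ := by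
        have := sub_eq_zero.mp (hvdef ▸ hv0)
        exact this
      have hgg : ⟪g, g⟫ = (Real.cot θ * h x₀) ^ 2 := by
        rw [hga, real_inner_smul_left, real_inner_smul_right, hμμ]; ring
      rw [Qfun_eq hx₀, ← hgdef, hgg]
      have h1 : h x₀ ^ 2 ≤ M ^ 2 := by nlinarith [hpos x₀ hx₀, hle x₀ hx₀]
      nlinarith [sq_nonneg (Real.cot θ), h1]
  -- conclude
  have hQξ : Qfun n θ h ξ ≤ Qfun n θ h x₀ := hmax hξ
  have hsq : ‖sgrad n θ h ξ‖ ^ 2 ≤ (1 + Real.cot θ ^ 2) * M ^ 2 := by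
    have hQeq := Qfun_eq (h := h) hξ
    have h2 : ⟪sgrad n θ h ξ, sgrad n θ h ξ⟫ = ‖sgrad n θ h ξ‖ ^ 2 :=
      real_inner_self_eq_norm_sq _
    nlinarith [sq_nonneg (h ξ)]
  calc ‖sgrad n θ h ξ‖ = Real.sqrt (‖sgrad n θ h ξ‖ ^ 2) :=
        (Real.sqrt_sq (norm_nonneg _)).symm
    _ ≤ Real.sqrt ((1 + Real.cot θ ^ 2) * M ^ 2) := Real.sqrt_le_sqrt hsq
    _ = Real.sqrt (1 + Real.cot θ ^ 2) * M := by
        rw [Real.sqrt_mul (by positivity), Real.sqrt_sq hM0.le]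
end
end

section
/- Let p > q, θ ∈ (0, π/2), let f > 0 be smooth on C_θ, and let h be a positive convex solution of det(∇²h + hσ) = f·h^{p-1}(h² + |∇h|²)^{(n+1-q)/2} in C_θ with ∇_μ h = cot θ · h on ∂C_θ. Then the linearized operator L_h(γ) := (∂𝒢/∂h_{ij})·((hγ)_{ij} + hγ δ_{ij}) − (∂𝒥₁/∂h_i)·(hγ)_i − (∂𝒥₁/∂h)·hγ, with 𝒢(h_{ij}, h) := det(∇²h + hσ) and 𝒥₁(∇h, h) := f·h^{p-1}(h² + |∇h|²)^{(n+1-q)/2}, evaluated at the constant function γ ≡ 1, equals L_h(1) = (q − p)·𝒥₁(∇h, h), which is strictly negative on C_θ. -/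
/- Formalization of statements from "The L_p dual Minkowski problem for capillary
hypersurfaces".

We work in the ambient space `ℝ^{n+1}`.  The spherical cap `C_θ` is the part of the unit
sphere centred at `cos θ • e` (where `e = -E_{n+1}`) lying in the closed upper half-space.
Functions on `C_θ` are represented by ambient functions `h : Euc n → ℝ`; the intrinsic
(round-metric) gradient `∇h` and Hessian `∇²h` of the restriction of `h` to `C_θ` are
expressed through ambient derivatives (for tangential arguments these expressions depend
only on the restriction of `h` to the cap).  The quantity `det(∇²h + hσ)` is encoded as the
determinant of the endomorphism of `ℝ^{n+1}` acting as `∇²h + hσ` on the tangent space of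
the cap and as the identity on the normal line. -/

open Real Set
open scoped RealInnerProductSpace

noncomputable section

/-! ### Auxiliary lemmas for the proof of Statement 18 -/

section Aux

variable {n : ℕ} {θ : ℝ} {ξ : Euc n}

lemma aux_inner_nu_nu (hν : ‖sphNormal n θ ξ‖ = 1) :
    ⟪sphNormal n θ ξ, sphNormal n θ ξ⟫ = 1 := by
  rw [real_inner_self_eq_norm_sq, hν]; norm_num

lemma aux_tproj_apply (X : Euc n) :
    tproj n θ ξ X = X - ⟪sphNormal n θ ξ, X⟫ • sphNormal n θ ξ := by
  simp [tproj]

lemma aux_tproj_nu (hν : ‖sphNormal n θ ξ‖ = 1) :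
    tproj n θ ξ (sphNormal n θ ξ) = 0 := by
  simp [aux_tproj_apply, aux_inner_nu_nu hν, hν]

lemma aux_tproj_idem (hν : ‖sphNormal n θ ξ‖ = 1) (X : Euc n) :
    tproj n θ ξ (tproj n θ ξ X) = tproj n θ ξ X := by
  rw [aux_tproj_apply (tproj n θ ξ X), aux_tproj_apply X, inner_sub_right,
    real_inner_smul_right, aux_inner_nu_nu hν]
  simp

lemma aux_inner_nu_tproj (hν : ‖sphNormal n θ ξ‖ = 1) (X : Euc n) :
    ⟪sphNormal n θ ξ, tproj n θ ξ X⟫ = 0 := by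
  rw [aux_tproj_apply X, inner_sub_right, real_inner_smul_right, aux_inner_nu_nu hν]
  simp

lemma aux_normalPart_apply (X : Euc n) :
    normalPart n θ ξ X = ⟪sphNormal n θ ξ, X⟫ • sphNormal n θ ξ := by
  simp [normalPart]

lemma aux_gradient_const_mul (h : Euc n → ℝ) (hh : ContDiff ℝ (⊤ : ℕ∞) h) (c : ℝ) :
    gradient (fun x => c * h x) = fun x => c • gradient h x := by
  funext x
  show (InnerProductSpace.toDual ℝ (Euc n)).symm (fderiv ℝ (fun y => c * h y) x)
      = c • (InnerProductSpace.toDual ℝ (Euc n)).symm (fderiv ℝ h x)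
  rw [fderiv_const_mul (hh.differentiable (by simp) x) c, map_smul]

lemma aux_contDiff_gradient (h : Euc n → ℝ) (hh : ContDiff ℝ (⊤ : ℕ∞) h) :
    ContDiff ℝ (⊤ : ℕ∞) (gradient h) := by
  have : gradient h = fun x =>
      (InnerProductSpace.toDual ℝ (Euc n)).symm.toContinuousLinearEquiv.toContinuousLinearMap
        (fderiv ℝ h x) := rfl
  rw [this]
  exact (ContinuousLinearMap.contDiff _).comp (hh.fderiv_right (by exact_mod_cast le_top))

lemma aux_sgrad_const_mul (h : Euc n → ℝ) (hh : ContDiff ℝ (⊤ : ℕ∞) h) (c : ℝ) :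
    sgrad n θ (fun x => c * h x) ξ = c • sgrad n θ h ξ := by
  unfold sgrad
  rw [aux_gradient_const_mul h hh c, map_smul]

lemma aux_thessOp_const_mul (h : Euc n → ℝ) (hh : ContDiff ℝ (⊤ : ℕ∞) h) (c : ℝ) :
    thessOp n θ (fun x => c * h x) ξ = c • thessOp n θ h ξ := by
  unfold thessOp
  rw [aux_gradient_const_mul h hh c,
    fderiv_fun_const_smul ((aux_contDiff_gradient h hh).differentiable (by simp) ξ) c]
  refine ContinuousLinearMap.ext fun X => ?_
  simp only [ContinuousLinearMap.sub_apply, ContinuousLinearMap.smul_apply,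
    ContinuousLinearMap.comp_apply, real_inner_smul_left, map_smul]
  module

/-- The scaling operator `c` on the tangent space, `1` on the normal line. -/
def scaleOp (n : ℕ) (θ : ℝ) (ξ : Euc n) (c : ℝ) : Euc n →L[ℝ] Euc n :=
  c • tproj n θ ξ + normalPart n θ ξ

lemma aux_hessOp_nu (h : Euc n → ℝ) (hν : ‖sphNormal n θ ξ‖ = 1) :
    hessOp n θ h ξ (sphNormal n θ ξ) = sphNormal n θ ξ := by
  simp [hessOp, thessOp, aux_tproj_nu hν, aux_normalPart_apply, aux_inner_nu_nu hν, hν]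

lemma aux_hessOp_tproj (h : Euc n → ℝ) (hν : ‖sphNormal n θ ξ‖ = 1) (X : Euc n) :
    hessOp n θ h ξ (tproj n θ ξ X) = thessOp n θ h ξ X + h ξ • tproj n θ ξ X := by
  simp only [hessOp, ContinuousLinearMap.add_apply, ContinuousLinearMap.smul_apply]
  rw [aux_tproj_idem hν X, aux_normalPart_apply, aux_inner_nu_tproj hν X]
  simp only [thessOp, ContinuousLinearMap.sub_apply, ContinuousLinearMap.smul_apply,
    ContinuousLinearMap.comp_apply]
  rw [aux_tproj_idem hν X]
  module

lemma aux_hessOp_const_mul (h : Euc n → ℝ) (hh : ContDiff ℝ (⊤ : ℕ∞) h)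
    (hν : ‖sphNormal n θ ξ‖ = 1) (c : ℝ) :
    hessOp n θ (fun x => c * h x) ξ = (hessOp n θ h ξ).comp (scaleOp n θ ξ c) := by
  refine ContinuousLinearMap.ext fun X => ?_
  have hlin : hessOp n θ h ξ (c • tproj n θ ξ X + ⟪sphNormal n θ ξ, X⟫ • sphNormal n θ ξ)
      = c • hessOp n θ h ξ (tproj n θ ξ X)
        + ⟪sphNormal n θ ξ, X⟫ • hessOp n θ h ξ (sphNormal n θ ξ) := by
    rw [map_add, map_smul, map_smul]
  simp only [ContinuousLinearMap.comp_apply, scaleOp, ContinuousLinearMap.add_apply,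
    ContinuousLinearMap.smul_apply, aux_normalPart_apply]
  rw [hlin, aux_hessOp_nu h hν, aux_hessOp_tproj h hν X]
  simp only [hessOp, ContinuousLinearMap.add_apply, ContinuousLinearMap.smul_apply,
    aux_normalPart_apply, aux_thessOp_const_mul h hh c]
  module

lemma aux_det_scaleOp (hν : ‖sphNormal n θ ξ‖ = 1) {c : ℝ} (hc : c ≠ 0) :
    LinearMap.det (scaleOp n θ ξ c).toLinearMap = c ^ n := by
  classical
  set ν := sphNormal n θ ξ with hνdef
  have hsum : ∑ i, ν i * ν i = 1 := by
    have := aux_inner_nu_nu hν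
    rw [← this]
    simp only [PiLp.inner_apply, RCLike.inner_apply, conj_trivial, hνdef]
  set b := (EuclideanSpace.basisFun (Fin (n + 1)) ℝ).toBasis with hb
  rw [← LinearMap.det_toMatrix b]
  have hmat : LinearMap.toMatrix b b (scaleOp n θ ξ c).toLinearMap
      = c • (1 + Matrix.replicateCol (Fin 1) (fun i => (1 - c) / c * ν i)
              * Matrix.replicateRow (Fin 1) (fun i => ν i)) := by
    ext i j
    rw [LinearMap.toMatrix_apply]
    have hbj : b j = EuclideanSpace.single j 1 := by
      rw [hb, OrthonormalBasis.coe_toBasis, EuclideanSpace.basisFun_apply]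
    have hrepr : ∀ x : Euc n, b.repr x i = x i := fun x => rfl
    simp only [ContinuousLinearMap.coe_coe, hbj, hrepr]
    have hin : ⟪ν, EuclideanSpace.single j (1 : ℝ)⟫ = ν j := by
      simp [PiLp.inner_apply, RCLike.inner_apply, EuclideanSpace.single_apply]
    simp only [scaleOp, ContinuousLinearMap.add_apply, ContinuousLinearMap.smul_apply,
      aux_tproj_apply, aux_normalPart_apply, ← hνdef, hin]
    simp only [Matrix.smul_apply, Matrix.add_apply, Matrix.mul_apply, Matrix.one_apply,
      Matrix.replicateCol_apply, Matrix.replicateRow_apply, Finset.sum_const, Finset.card_univ, Fintype.card_fin,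
      one_smul, smul_eq_mul]
    have hsingle : (EuclideanSpace.single j (1 : ℝ)) i = if i = j then 1 else 0 := by
      simp [EuclideanSpace.single_apply]
    try simp only [PiLp.sub_apply, PiLp.smul_apply, smul_eq_mul, hsingle]
    by_cases hij : i = j <;> simp [hij] <;> field_simp <;> ring
  rw [hmat, Matrix.det_smul]
  erw [Matrix.det_one_add_replicateCol_mul_replicateRow (ι := Fin 1)]
  have hdot : dotProduct (fun i => ν i) (fun i => (1 - c) / c * ν i)
      = (1 - c) / c := by
    simp only [dotProduct]
    rw [show ∑ i, ν i * ((1 - c) / c * ν i) = (1 - c) / c * ∑ i, ν i * ν i by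
      rw [Finset.mul_sum]; exact Finset.sum_congr rfl fun i _ => by ring]
    rw [hsum, mul_one]
  rw [hdot]
  have : (1 : ℝ) + (1 - c) / c = 1 / c := by field_simp; ring
  rw [this]
  field_simp
  rw [Fintype.card_fin]; ring

lemma aux_sdet_const_mul (h : Euc n → ℝ) (hh : ContDiff ℝ (⊤ : ℕ∞) h)
    (hν : ‖sphNormal n θ ξ‖ = 1) {c : ℝ} (hc : c ≠ 0) :
    sdet n θ (fun x => c * h x) ξ = c ^ n * sdet n θ h ξ := by
  unfold sdet
  rw [aux_hessOp_const_mul h hh hν c, ContinuousLinearMap.toLinearMap_comp, LinearMap.det_comp,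
    aux_det_scaleOp hν hc]
  ring

lemma aux_eqRHS_const_mul (p q : ℝ) (f h : Euc n → ℝ) (hh : ContDiff ℝ (⊤ : ℕ∞) h)
    {c : ℝ} (hc : 0 < c) (hpos : 0 < h ξ) :
    eqRHS n θ p q f (fun x => c * h x) ξ
      = c ^ (p - 1) * c ^ ((n : ℝ) + 1 - q) * eqRHS n θ p q f h ξ := by
  unfold eqRHS
  rw [aux_sgrad_const_mul h hh c]
  have h1 : (c * h ξ) ^ (p - 1) = c ^ (p - 1) * h ξ ^ (p - 1) :=
    Real.mul_rpow hc.le hpos.le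
  have h2 : ‖c • sgrad n θ h ξ‖ = c * ‖sgrad n θ h ξ‖ := by
    rw [norm_smul, Real.norm_eq_abs, abs_of_pos hc]
  have h3 : (c * h ξ) ^ 2 + ‖c • sgrad n θ h ξ‖ ^ 2
      = c ^ 2 * (h ξ ^ 2 + ‖sgrad n θ h ξ‖ ^ 2) := by
    rw [h2]; ring
  rw [h1, h3]
  have h4 : (c ^ 2 * (h ξ ^ 2 + ‖sgrad n θ h ξ‖ ^ 2)) ^ (((n : ℝ) + 1 - q) / 2)
      = (c ^ 2 : ℝ) ^ (((n : ℝ) + 1 - q) / 2)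
          * (h ξ ^ 2 + ‖sgrad n θ h ξ‖ ^ 2) ^ (((n : ℝ) + 1 - q) / 2) :=
    Real.mul_rpow (sq_nonneg c) (by positivity)
  rw [h4]
  have h5 : (c ^ 2 : ℝ) ^ (((n : ℝ) + 1 - q) / 2) = c ^ ((n : ℝ) + 1 - q) := by
    rw [← Real.rpow_natCast c 2, ← Real.rpow_mul hc.le]
    congr 1
    ring
  rw [h5]
  ring

end Aux

/-- from the proof of Lemma 5.2: at a positive convex solution `h`, the
linearized operator evaluated at the constant function `γ ≡ 1` equals
`L_h(1) = (q - p)·𝒥₁(∇h, h)`, which is strictly negative on `C_θ` when `p > q`. -/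
theorem linearized_operator_at_one
    (n : ℕ) (hn : 1 ≤ n) (θ p q : ℝ) (hθ : θ ∈ Set.Ioo 0 (π / 2)) (hpq : q < p)
    (f : Euc n → ℝ) (hf : ContDiff ℝ (⊤ : ℕ∞) f) (hfpos : ∀ ξ ∈ cap n θ, 0 < f ξ)
    (h : Euc n → ℝ) (hh : ContDiff ℝ (⊤ : ℕ∞) h) (hhpos : PosOnCap n θ h)
    (hconv : IsConvexSol n θ h) (heq : SolvesEq n θ p q f h) (hR : RobinBC n θ h) :
    ∀ ξ ∈ cap n θ,
      linOp n θ p q f h (fun _ => 1) ξ = (q - p) * eqRHS n θ p q f h ξ ∧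
      linOp n θ p q f h (fun _ => 1) ξ < 0 := by
  intro ξ hξ
  have hν : ‖sphNormal n θ ξ‖ = 1 := hξ.2
  have hpos : 0 < h ξ := hhpos ξ hξ
  have hB : 0 < eqRHS n θ p q f h ξ := by
    unfold eqRHS
    exact mul_pos (mul_pos (hfpos ξ hξ) (Real.rpow_pos_of_pos hpos _))
      (Real.rpow_pos_of_pos (by positivity) _)
  have key : linOp n θ p q f h (fun _ => 1) ξ = (q - p) * eqRHS n θ p q f h ξ := by
    unfold linOp
    set B := eqRHS n θ p q f h ξ with hBdef
    have heval : (fun ε : ℝ =>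
        sdet n θ (fun x => h x * Real.exp (ε * (fun _ : Euc n => (1:ℝ)) x)) ξ
          - eqRHS n θ p q f (fun x => h x * Real.exp (ε * (fun _ : Euc n => (1:ℝ)) x)) ξ)
        = fun ε : ℝ => B * Real.exp (ε * n) - B * Real.exp (ε * (p + n - q)) := by
      funext ε
      have hfun : (fun x : Euc n => h x * Real.exp (ε * (1:ℝ)))
          = fun x => Real.exp ε * h x := by
        funext x; rw [mul_one, mul_comm]
      simp only
      rw [hfun, aux_sdet_const_mul h hh hν (Real.exp_ne_zero ε),
        aux_eqRHS_const_mul p q f h hh (Real.exp_pos ε) hpos, heq ξ hξ, ← hBdef]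
      have e1 : (Real.exp ε) ^ n = Real.exp (ε * n) := by
        rw [← Real.exp_nat_mul]; ring_nf
      have e2 : Real.exp ε ^ (p - 1) * Real.exp ε ^ ((n : ℝ) + 1 - q)
          = Real.exp (ε * (p + n - q)) := by
        rw [← Real.rpow_add (Real.exp_pos ε), ← Real.exp_one_rpow ε,
          ← Real.rpow_mul (Real.exp_pos 1).le, Real.exp_one_rpow]
        ring_nf
      rw [e1, e2]
      ring
    rw [heval]
    have h1 : HasDerivAt (fun ε : ℝ => ε * (n : ℝ)) (n : ℝ) 0 := by
      simpa using (hasDerivAt_id (0:ℝ)).mul_const (n : ℝ)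
    have h2 : HasDerivAt (fun ε : ℝ => ε * (p + n - q)) (p + n - q) 0 := by
      simpa using (hasDerivAt_id (0:ℝ)).mul_const (p + n - q)
    have hd : HasDerivAt (fun ε : ℝ => B * Real.exp (ε * n) - B * Real.exp (ε * (p + n - q)))
        (B * (Real.exp (0 * n) * n) - B * (Real.exp (0 * (p + n - q)) * (p + n - q))) 0 :=
      ((h1.exp.const_mul B).sub (h2.exp.const_mul B))
    rw [hd.deriv]
    simp only [zero_mul, Real.exp_zero, one_mul]
    ring
  refine ⟨key, ?_⟩
  rw [key]
  exact mul_neg_of_neg_of_pos (by linarith) hB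
end
end
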